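/- Let $D$ be a nonempty bounded open subset of $\mathbb{R}^3$, and let $p, p' \in \mathbb{R}^3 \setminus \overline{D}$ be such that the segment $[p,p'] = \{sp + (1-s)p' : 0 \le s \le 1\}$ satisfies $[p,p'] \cap \overline{D} = \emptyset$. Then $\inf_{x \in D} \left(1 + \frac{(p-x)\cdot(p'-x)}{|p-x|\,|p'-x|}\right) > 0$. -/

import Mathlib

open RealInnerProductSpace

/-- If `D` is a nonempty bounded open subset of `ℝ³` and `p, p'` lie outside `closure D`
with the segment `[p,p']` disjoint from `closure D`, then
`inf_{x ∈ D} (1 + ⟪p-x, p'-x⟫ / (‖p-x‖ ‖p'-x‖)) > 0`. -/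
theorem stmt0 (D : Set (EuclideanSpace ℝ (Fin 3))) (p p' : EuclideanSpace ℝ (Fin 3))
    (hD : D.Nonempty) (hDo : IsOpen D) (hDb : Bornology.IsBounded D)
    (hp : p ∉ closure D) (hp' : p' ∉ closure D)
    (hseg : segment ℝ p p' ∩ closure D = ∅) :
    ∃ ε > 0, ∀ x ∈ D,
      ε ≤ 1 + (inner ℝ (p - x) (p' - x) : ℝ) / (‖p - x‖ * ‖p' - x‖) := by
  set f : EuclideanSpace ℝ (Fin 3) → ℝ :=
    fun x => 1 + (inner ℝ (p - x) (p' - x) : ℝ) / (‖p - x‖ * ‖p' - x‖) with hf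
  have hcl : IsCompact (closure D) := hDb.isCompact_closure
  have hne : (closure D).Nonempty := hD.closure
  have hnz : ∀ x ∈ closure D, p - x ≠ 0 ∧ p' - x ≠ 0 := by
    intro x hx
    constructor
    · exact sub_ne_zero.mpr fun h => hp (h ▸ hx)
    · exact sub_ne_zero.mpr fun h => hp' (h ▸ hx)
  have hcont : ContinuousOn f (closure D) := by
    apply ContinuousOn.add continuousOn_const
    apply ContinuousOn.div
    · exact (Continuous.inner (continuous_const.sub continuous_id)
        (continuous_const.sub continuous_id)).continuousOn
    · exact ((continuous_const.sub continuous_id).norm.mul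
        (continuous_const.sub continuous_id).norm).continuousOn
    · intro x hx
      exact mul_ne_zero (norm_ne_zero_iff.mpr (hnz x hx).1)
        (norm_ne_zero_iff.mpr (hnz x hx).2)
  have hpos : ∀ x ∈ closure D, 0 < f x := by
    intro x hx
    have h1 : |(inner ℝ (p - x) (p' - x) : ℝ) / (‖p - x‖ * ‖p' - x‖)| ≤ 1 :=
      abs_real_inner_div_norm_mul_norm_le_one _ _
    have h2 : -1 ≤ (inner ℝ (p - x) (p' - x) : ℝ) / (‖p - x‖ * ‖p' - x‖) :=
      neg_le_of_abs_le h1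
    rcases lt_or_eq_of_le h2 with h | h
    · have hfx : f x = 1 + (inner ℝ (p - x) (p' - x) : ℝ) / (‖p - x‖ * ‖p' - x‖) := rfl
      rw [hfx]; linarith
    · exfalso
      have := (real_inner_div_norm_mul_norm_eq_neg_one_iff (p - x) (p' - x)).mp h.symm
      obtain ⟨-, r, hr, hrx⟩ := this
      have hx_seg : x ∈ segment ℝ p p' := by
        have hr1 : (0:ℝ) < 1 - r := by linarith
        refine ⟨(-r) / (1 - r), 1 / (1 - r), div_nonneg (by linarith) hr1.le,
          div_nonneg zero_le_one hr1.le, ?_, ?_⟩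
        · rw [← add_div, div_eq_one_iff_eq hr1.ne']; ring
        · have : p' - x = r • (p - x) := hrx
          have hx' : (1 - r) • x = p' - r • p := by
            have := this
            rw [smul_sub] at this
            rw [sub_smul, one_smul]
            abel_nf
            abel_nf at this
            linear_combination (norm := module) -this
          have : x = ((1 - r)⁻¹ * (1 - r)) • x := by
            rw [inv_mul_cancel₀ hr1.ne', one_smul]
          rw [this, mul_smul, hx', smul_sub]
          rw [div_eq_mul_inv, div_eq_mul_inv, neg_mul, one_mul]
          module
      exact Set.eq_empty_iff_forall_notMem.mp hseg x ⟨hx_seg, hx⟩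
  obtain ⟨x₀, hx₀, hmin⟩ := hcl.exists_isMinOn hne hcont
  refine ⟨f x₀, hpos x₀ hx₀, fun x hx => hmin (subset_closure hx)⟩
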